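/- Let (Ω, F, P) be a probability space, ρ : L∞(Ω, F, P) → ℝ a star-shaped risk measure, and Y ∈ L∞. Then the set 𝒜_Y = { Z ∈ L∞ : Z ≤ α(Y − ρ(Y)) P-a.s. for some α ∈ [0,1] } is Fatou closed: if (X_n) is a uniformly bounded sequence in 𝒜_Y converging P-almost surely to X, then X ∈ 𝒜_Y. -/

import Mathlib

open MeasureTheory Filter

variable {Ω : Type*}

/-- The constant function, as an element of `L∞`. -/
noncomputable def Lconst [MeasurableSpace Ω] (P : Measure Ω) [IsProbabilityMeasure P]
    (m : ℝ) : Lp ℝ ⊤ P :=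
  (memLp_const m).toLp (fun _ => m)

def IsRiskMeasure [MeasurableSpace Ω] (P : Measure Ω) [IsProbabilityMeasure P]
    (ρ : Lp ℝ ⊤ P → ℝ) : Prop :=
  (∀ X Y : Lp ℝ ⊤ P, Y ≤ X → ρ Y ≤ ρ X) ∧
  (∀ (X : Lp ℝ ⊤ P) (m : ℝ), ρ (X - Lconst P m) = ρ X - m) ∧
  ρ 0 = 0

def IsStarShaped [MeasurableSpace Ω] (P : Measure Ω) [IsProbabilityMeasure P]
    (ρ : Lp ℝ ⊤ P → ℝ) : Prop :=
  ∀ (X : Lp ℝ ⊤ P) (l : ℝ), 1 < l → l * ρ X ≤ ρ (l • X)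

theorem fatou_closedness_of_AY
    [MeasurableSpace Ω] (P : Measure Ω) [IsProbabilityMeasure P]
    (ρ : Lp ℝ ⊤ P → ℝ) (hρ : IsRiskMeasure P ρ) (hss : IsStarShaped P ρ)
    (Y : Lp ℝ ⊤ P)
    (Xs : ℕ → Lp ℝ ⊤ P) (X : Lp ℝ ⊤ P)
    -- each `X n` lies in `𝒜_Y`
    (hmem : ∀ n, ∃ α ∈ Set.Icc (0 : ℝ) 1, Xs n ≤ α • (Y - Lconst P (ρ Y)))
    -- uniform boundedness
    (hbdd : ∃ C : ℝ, ∀ n, ∀ᵐ ω ∂P, |Xs n ω| ≤ C)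
    -- `P`-almost sure convergence to `X`
    (hconv : ∀ᵐ ω ∂P, Tendsto (fun n => Xs n ω) atTop (nhds (X ω))) :
    ∃ α ∈ Set.Icc (0 : ℝ) 1, X ≤ α • (Y - Lconst P (ρ Y)) := by
  classical
  choose αs hαs hle using hmem
  obtain ⟨α, hα, φ, hφ, hαconv⟩ :=
    (isCompact_Icc (a := (0:ℝ)) (b := 1)).tendsto_subseq hαs
  refine ⟨α, hα, ?_⟩
  set W : Lp ℝ ⊤ P := Y - Lconst P (ρ Y) with hWdef
  have hWcoe : ∀ᵐ ω ∂P, (W : Ω → ℝ) ω = (Y : Ω → ℝ) ω - ρ Y := by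
    filter_upwards [Lp.coeFn_sub Y (Lconst P (ρ Y)),
      (memLp_const (μ := P) (ρ Y)).coeFn_toLp] with ω h1 h2
    rw [hWdef, h1, Pi.sub_apply]; unfold Lconst; rw [h2]
  have hsmul : ∀ n : ℕ, ∀ᵐ ω ∂P, Xs n ω ≤ αs n * ((Y : Ω → ℝ) ω - ρ Y) := by
    intro n
    filter_upwards [(Lp.coeFn_le _ _).mpr (hle n), Lp.coeFn_smul (αs n) W, hWcoe]
      with ω h1 h2 h3
    calc Xs n ω ≤ (αs n • W : Lp ℝ ⊤ P) ω := h1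
      _ = αs n * ((Y : Ω → ℝ) ω - ρ Y) := by rw [h2]; simp [h3]
  rw [← Lp.coeFn_le]
  filter_upwards [ae_all_iff.mpr hsmul, hconv, Lp.coeFn_smul α W, hWcoe]
    with ω h1 h2 h3 h4
  have hXlim : Tendsto (fun k => Xs (φ k) ω) atTop (nhds (X ω)) :=
    h2.comp hφ.tendsto_atTop
  have hαlim : Tendsto (fun k => αs (φ k) * ((Y : Ω → ℝ) ω - ρ Y)) atTop
      (nhds (α * ((Y : Ω → ℝ) ω - ρ Y))) :=
    hαconv.mul_const _
  have : X ω ≤ α * ((Y : Ω → ℝ) ω - ρ Y) :=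
    le_of_tendsto_of_tendsto' hXlim hαlim fun k => h1 (φ k)
  calc X ω ≤ α * ((Y : Ω → ℝ) ω - ρ Y) := this
    _ = (α • W : Lp ℝ ⊤ P) ω := by rw [h3]; simp [h4]
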